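/- Let p be a prime with p ≡ -1 (mod 12) and p ≡ -1 (mod 9) (i.e., p = 12r-1 with r = 3k). In the ring R[X]/(X^p - 1) with R = ℤ₉[u]/(u²-u), the elements 8Q(X), 8N(X), 1+Q(X), 1+N(X) are idempotents, where Q(X) = Σ_{i ∈ Q_p} X^i and N(X) = Σ_{i ∈ N_p} X^i, with Q_p the set of nonzero quadratic residues mod p and N_p the set of quadratic non-residues mod p. -/

import Mathlib

open Polynomial

noncomputable section

/-- The ring `R = ℤ₉[u]/(u² - u)`. -/
abbrev R9 : Type := Polynomial (ZMod 9) ⧸ Ideal.span {(X : Polynomial (ZMod 9)) ^ 2 - X}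

instance : CommRing R9 := Ideal.Quotient.commRing _

/-- The element `u` of `R`, the image of `X`. -/
def uu : R9 := Ideal.Quotient.mk _ (X : Polynomial (ZMod 9))

/-- The canonical embedding `ℤ₉ → R`. -/
def ι : ZMod 9 →+* R9 :=
  (Ideal.Quotient.mk _).comp (Polynomial.C : ZMod 9 →+* Polynomial (ZMod 9))
/-- The quotient ring `R[X]/(Xⁿ - 1)`. -/
abbrev Rn (n : ℕ) : Type := Polynomial R9 ⧸ Ideal.span {(X : Polynomial R9) ^ n - 1}

instance (n : ℕ) : CommRing (Rn n) := Ideal.Quotient.commRing _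

/-- The constants embedding `R → R[X]/(Xⁿ-1)`. -/
def ofR (n : ℕ) : R9 →+* Rn n :=
  (Ideal.Quotient.mk _).comp (Polynomial.C : R9 →+* Polynomial R9)

/-- The image of `X` in `R[X]/(Xⁿ-1)`. -/
def xbar (n : ℕ) : Rn n := Ideal.Quotient.mk _ (X : Polynomial R9)

/-- A word `c ∈ Rⁿ` viewed as the element `Σ cᵢ Xⁱ` of `R[X]/(Xⁿ-1)`. -/
def toPoly (n : ℕ) (c : Fin n → R9) : Rn n :=
  ∑ i, ofR n (c i) * xbar n ^ (i : ℕ)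

/-- The ring endomorphism of `R[X]/(Xⁿ-1)` induced by `X ↦ X^{n-1} = X⁻¹`. -/
def invX (n : ℕ) : Rn n →+* Rn n :=
  Ideal.Quotient.lift _ (Polynomial.eval₂RingHom (ofR n) (xbar n ^ (n - 1)))
    (by
      intro a ha
      have hx : xbar n ^ n = 1 := by
        rw [xbar, ← map_pow, ← map_one (Ideal.Quotient.mk _),
          Ideal.Quotient.mk_eq_mk_iff_sub_mem]
        exact Ideal.subset_span rfl
      have h : Ideal.span {(X : Polynomial R9) ^ n - 1} ≤
          RingHom.ker (Polynomial.eval₂RingHom (ofR n) (xbar n ^ (n - 1))) := by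
        rw [Ideal.span_le, Set.singleton_subset_iff]
        simp only [SetLike.mem_coe, RingHom.mem_ker, map_sub, map_pow, map_one,
          Polynomial.coe_eval₂RingHom, Polynomial.eval₂_X]
        rw [← pow_mul, Nat.mul_comm, pow_mul, hx, one_pow, sub_self]
      exact h ha)

/-- The Euclidean dual of the cyclic code given by an ideal of `R[X]/(Xⁿ-1)`. -/
def dualCode (n : ℕ) (J : Ideal (Rn n)) : Set (Fin n → R9) :=
  {x | ∀ c : Fin n → R9, toPoly n c ∈ J → ∑ i, x i * c i = 0}

/-- The cyclic shift. -/
def shift {α : Type*} {n : ℕ} [NeZero n] (c : Fin n → α) : Fin n → α :=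
  fun i => c (i - 1)

open scoped Classical

/-- `Q(X) = Σ_{i ∈ Q_p} Xⁱ`, the sum over nonzero quadratic residues mod `p`,
as an element of `R[X]/(X^p - 1)`. -/
def Qpoly (p : ℕ) [Fact p.Prime] : Rn p :=
  ∑ i : ZMod p, if i ≠ 0 ∧ IsSquare i then xbar p ^ i.val else 0

/-- `N(X) = Σ_{i ∈ N_p} Xⁱ`, the sum over quadratic non-residues mod `p`. -/
def Npoly (p : ℕ) [Fact p.Prime] : Rn p :=
  ∑ i : ZMod p, if i ≠ 0 ∧ ¬ IsSquare i then xbar p ^ i.val else 0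

namespace Stmt16Aux

variable (p : ℕ) [Fact p.Prime]

/-- `X^p = 1` in `Rn p`. -/
lemma xbar_pow_self : xbar p ^ p = 1 := by
  rw [xbar, ← map_pow, ← map_one (Ideal.Quotient.mk _),
    Ideal.Quotient.mk_eq_mk_iff_sub_mem]
  exact Ideal.subset_span rfl

lemma xbar_pow_mod (a : ℕ) : xbar p ^ (a % p) = xbar p ^ a := by
  conv_rhs => rw [← Nat.mod_add_div a p]
  rw [pow_add, pow_mul, xbar_pow_self, one_pow, mul_one]

/-- The "exponential" map `i ↦ X^i`. -/
def ee (i : ZMod p) : Rn p := xbar p ^ i.val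

lemma ee_add (i j : ZMod p) : ee p (i + j) = ee p i * ee p j := by
  rw [ee, ee, ee, ← pow_add, ZMod.val_add, xbar_pow_mod]

lemma ee_zero : ee p 0 = 1 := by
  simp [ee, ZMod.val_zero]

/-- `S = Σ Xⁱ`. -/
def SS : Rn p := ∑ i : ZMod p, ee p i

/-- The quadratic character with values cast into `Rn p`. -/
def cc (i : ZMod p) : Rn p := ((quadraticChar (ZMod p) i : ℤ) : Rn p)

/-- `G = Σ χ(i) Xⁱ`. -/
def GG : Rn p := ∑ i : ZMod p, cc p i * ee p i

lemma SS_mul_ee (j : ZMod p) : SS p * ee p j = SS p := by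
  rw [SS, Finset.sum_mul]
  exact Fintype.sum_equiv (Equiv.addRight j) _ _ fun i => (ee_add p i j).symm

lemma SS_sq : SS p * SS p = (p : Rn p) * SS p := by
  nth_rewrite 2 [SS]
  rw [Finset.mul_sum]
  simp only [SS_mul_ee]
  rw [Finset.sum_const, Finset.card_univ, ZMod.card, nsmul_eq_mul]

lemma SS_mul_GG (hp : ringChar (ZMod p) ≠ 2) : SS p * GG p = 0 := by
  have hsum : (∑ j : ZMod p, quadraticChar (ZMod p) j) = 0 :=
    quadraticChar_sum_zero hp
  calc SS p * GG p = ∑ j : ZMod p, cc p j * (SS p * ee p j) := by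
        rw [GG, Finset.mul_sum]; exact Finset.sum_congr rfl fun j _ => by ring
    _ = ∑ j : ZMod p, cc p j * SS p := by simp only [SS_mul_ee]
    _ = (∑ j : ZMod p, cc p j) * SS p := by rw [Finset.sum_mul]
    _ = 0 := by
        rw [show (∑ j : ZMod p, cc p j)
            = (((∑ j : ZMod p, quadraticChar (ZMod p) j : ℤ)) : Rn p) by push_cast [cc]; rfl,
          hsum]
        simp

lemma chi_neg_one (hp4 : p % 4 = 3) : quadraticChar (ZMod p) (-1) = -1 :=
  quadraticChar_neg_one_iff_not_isSquare.mpr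
    (by rw [ZMod.exists_sq_eq_neg_one_iff]; simp [hp4])

/-- The key character sum: `Σᵢ χ(i)χ(k-i) = -χ(-1)` for `k ≠ 0`. -/
lemma jsum_ne (hp : ringChar (ZMod p) ≠ 2) (k : ZMod p) (hk : k ≠ 0) :
    (∑ i : ZMod p, quadraticChar (ZMod p) i * quadraticChar (ZMod p) (k - i))
      = -(quadraticChar (ZMod p) (-1)) := by
  classical
  set χ := quadraticChar (ZMod p) with hχ
  have h0 : (∑ i : ZMod p, χ i * χ (k - i))
      = ∑ i ∈ Finset.univ.erase (0 : ZMod p), χ i * χ (k - i) := by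
    rw [Finset.sum_erase _ (by simp [hχ, quadraticChar_zero])]
  have h1 : (∑ i ∈ Finset.univ.erase (0 : ZMod p), χ i * χ (k - i))
      = ∑ i ∈ Finset.univ.erase (0 : ZMod p), χ (k * i⁻¹ - 1) := by
    refine Finset.sum_congr rfl fun i hi => ?_
    have hi0 : i ≠ 0 := Finset.ne_of_mem_erase hi
    have hrw : k - i = i * (k * i⁻¹ - 1) := by
      field_simp
    rw [hrw, map_mul, ← mul_assoc, ← pow_two, quadraticChar_sq_one hi0, one_mul]
  have h2 : (∑ i ∈ Finset.univ.erase (0 : ZMod p), χ (k * i⁻¹ - 1))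
      = ∑ j ∈ Finset.univ.erase (0 : ZMod p), χ (j - 1) := by
    refine Finset.sum_nbij' (fun i => k * i⁻¹) (fun j => k * j⁻¹) ?_ ?_ ?_ ?_ ?_
    · intro a ha
      have ha0 : a ≠ 0 := Finset.ne_of_mem_erase ha
      simp [Finset.mem_erase, mul_eq_zero, hk, inv_eq_zero, ha0]
    · intro a ha
      have ha0 : a ≠ 0 := Finset.ne_of_mem_erase ha
      simp [Finset.mem_erase, mul_eq_zero, hk, inv_eq_zero, ha0]
    · intro a ha
      have ha0 : a ≠ 0 := Finset.ne_of_mem_erase ha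
      field_simp
    · intro a ha
      have ha0 : a ≠ 0 := Finset.ne_of_mem_erase ha
      field_simp
    · intro a _; rfl
  have h3 : (∑ j ∈ Finset.univ.erase (0 : ZMod p), χ (j - 1))
      = (∑ j : ZMod p, χ (j - 1)) - χ (0 - 1) :=
    Finset.sum_erase_eq_sub (Finset.mem_univ _)
  have h4 : (∑ j : ZMod p, χ (j - 1)) = ∑ m : ZMod p, χ m :=
    Fintype.sum_equiv (Equiv.subRight (1 : ZMod p)) _ _ fun j => rfl
  have h5 : (∑ m : ZMod p, χ m) = 0 := quadraticChar_sum_zero hp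
  rw [h0, h1, h2, h3, h4, h5, zero_sub, zero_sub]

/-- The character sum at `k = 0`: `Σᵢ χ(i)χ(-i) = χ(-1)(p-1)`. -/
lemma jsum_zero :
    (∑ i : ZMod p, quadraticChar (ZMod p) i * quadraticChar (ZMod p) ((0 : ZMod p) - i))
      = quadraticChar (ZMod p) (-1) * ((p : ℤ) - 1) := by
  classical
  set χ := quadraticChar (ZMod p) with hχ
  have h1 : ∀ i : ZMod p, χ i * χ (0 - i) = χ (-1) * (χ i)^2 := by
    intro i
    rw [zero_sub, show (-i : ZMod p) = (-1) * i by ring, map_mul]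
    ring
  have h2 : (∑ i : ZMod p, (χ i)^2) = (p : ℤ) - 1 := by
    have : ∀ i : ZMod p, (χ i)^2 = if i = 0 then 0 else 1 := by
      intro i
      by_cases hi : i = 0
      · simp [hi, hχ, quadraticChar_zero]
      · rw [if_neg hi]; exact quadraticChar_sq_one hi
    calc (∑ i : ZMod p, (χ i)^2) = ∑ i : ZMod p, ((1:ℤ) - if i = 0 then 1 else 0) := by
          refine Finset.sum_congr rfl fun i _ => by rw [this i]; split <;> simp
      _ = (p : ℤ) - 1 := by
          rw [Finset.sum_sub_distrib, Finset.sum_const, Finset.card_univ, ZMod.card,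
            Finset.sum_ite_eq' Finset.univ (0 : ZMod p)]
          simp
  calc (∑ i : ZMod p, χ i * χ (0 - i)) = ∑ i : ZMod p, χ (-1) * (χ i)^2 :=
        Finset.sum_congr rfl fun i _ => h1 i
    _ = χ (-1) * ∑ i : ZMod p, (χ i)^2 := by rw [Finset.mul_sum]
    _ = χ (-1) * ((p : ℤ) - 1) := by rw [h2]

lemma GG_sq (hp4 : p % 4 = 3) (hp : ringChar (ZMod p) ≠ 2) :
    GG p * GG p = SS p - (p : Rn p) := by
  classical
  set χ := quadraticChar (ZMod p) with hχ
  have step1 : GG p * GG p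
      = ∑ i : ZMod p, ∑ j : ZMod p, (cc p i * cc p j) * ee p (i + j) := by
    rw [GG, Finset.sum_mul_sum]
    exact Finset.sum_congr rfl fun i _ => Finset.sum_congr rfl fun j _ => by
      rw [ee_add]; ring
  have step2 : ∀ i : ZMod p,
      (∑ j : ZMod p, (cc p i * cc p j) * ee p (i + j))
        = ∑ k : ZMod p, (cc p i * cc p (k - i)) * ee p k := by
    intro i
    exact Fintype.sum_equiv (Equiv.addLeft i) _ _ fun j => by
      simp [Equiv.addLeft]
  have step3 : GG p * GG p
      = ∑ k : ZMod p, (∑ i : ZMod p, cc p i * cc p (k - i)) * ee p k := by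
    rw [step1, Finset.sum_congr rfl fun i _ => step2 i, Finset.sum_comm]
    exact Finset.sum_congr rfl fun k _ => by rw [Finset.sum_mul]
  have hcast : ∀ k : ZMod p, (∑ i : ZMod p, cc p i * cc p (k - i))
      = (((∑ i : ZMod p, χ i * χ (k - i) : ℤ)) : Rn p) := by
    intro k
    push_cast [cc]
    rfl
  have hterm : ∀ k : ZMod p,
      (∑ i : ZMod p, cc p i * cc p (k - i)) * ee p k
        = ee p k + (if k = 0 then -(p : Rn p) else 0) := by
    intro k
    by_cases hk : k = 0
    · subst hk
      rw [hcast, jsum_zero, chi_neg_one p hp4, ee_zero, if_pos rfl]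
      push_cast
      ring
    · rw [hcast, jsum_ne p hp k hk, chi_neg_one p hp4]
      simp [hk]
  rw [step3, Finset.sum_congr rfl fun k _ => hterm k, Finset.sum_add_distrib,
    Finset.sum_ite_eq' Finset.univ (0 : ZMod p)]
  simp only [Finset.mem_univ, if_true]
  rw [SS]
  ring

lemma two_Q : SS p + GG p = 2 * Qpoly p + 1 := by
  classical
  set χ := quadraticChar (ZMod p) with hχ
  have hterm : ∀ i : ZMod p,
      ee p i + cc p i * ee p i
        = 2 * (if i ≠ 0 ∧ IsSquare i then xbar p ^ i.val else 0)
          + (if i = 0 then 1 else 0) := by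
    intro i
    by_cases hi : i = 0
    · subst hi
      simp [cc, quadraticChar_zero, ee_zero]
    · by_cases hsq : IsSquare i
      · have : χ i = 1 := (quadraticChar_one_iff_isSquare hi).mpr hsq
        simp only [cc, ← hχ, this, hi, hsq, if_true, if_false, and_true, ne_eq,
          not_false_eq_true, true_and]
        push_cast
        rw [show ee p i = xbar p ^ i.val from rfl]
        ring
      · have : χ i = -1 := quadraticChar_neg_one_iff_not_isSquare.mpr hsq
        simp only [cc, ← hχ, this, hi, hsq, if_false, and_false, ne_eq]
        push_cast
        ring
  calc SS p + GG p = ∑ i : ZMod p, (ee p i + cc p i * ee p i) := by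
        rw [SS, GG, ← Finset.sum_add_distrib]
    _ = ∑ i : ZMod p, (2 * (if i ≠ 0 ∧ IsSquare i then xbar p ^ i.val else 0)
          + (if i = 0 then 1 else 0)) := Finset.sum_congr rfl fun i _ => hterm i
    _ = 2 * Qpoly p + 1 := by
        rw [Finset.sum_add_distrib, ← Finset.mul_sum, ← Qpoly,
          Finset.sum_ite_eq' Finset.univ (0 : ZMod p)]
        simp

lemma two_N : SS p - GG p = 2 * Npoly p + 1 := by
  classical
  set χ := quadraticChar (ZMod p) with hχ
  have hterm : ∀ i : ZMod p,
      ee p i - cc p i * ee p i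
        = 2 * (if i ≠ 0 ∧ ¬ IsSquare i then xbar p ^ i.val else 0)
          + (if i = 0 then 1 else 0) := by
    intro i
    by_cases hi : i = 0
    · subst hi
      simp [cc, quadraticChar_zero, ee_zero]
    · by_cases hsq : IsSquare i
      · have : χ i = 1 := (quadraticChar_one_iff_isSquare hi).mpr hsq
        simp only [cc, ← hχ, this, hi, hsq, if_false, not_true_eq_false, and_false, ne_eq]
        push_cast
        ring
      · have : χ i = -1 := quadraticChar_neg_one_iff_not_isSquare.mpr hsq
        simp only [cc, ← hχ, this, hi, hsq, if_true, not_false_eq_true, and_true, ne_eq,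
          true_and]
        push_cast
        rw [show ee p i = xbar p ^ i.val from rfl]
        ring
  calc SS p - GG p = ∑ i : ZMod p, (ee p i - cc p i * ee p i) := by
        rw [SS, GG, ← Finset.sum_sub_distrib]
    _ = ∑ i : ZMod p, (2 * (if i ≠ 0 ∧ ¬ IsSquare i then xbar p ^ i.val else 0)
          + (if i = 0 then 1 else 0)) := Finset.sum_congr rfl fun i _ => hterm i
    _ = 2 * Npoly p + 1 := by
        rw [Finset.sum_add_distrib, ← Finset.mul_sum, ← Npoly,
          Finset.sum_ite_eq' Finset.univ (0 : ZMod p)]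
        simp

end Stmt16Aux

theorem stmt16 (p : ℕ) [Fact p.Prime] (hp12 : p % 12 = 11) (hp9 : p % 9 = 8) :
    IsIdempotentElem (8 * Qpoly p) ∧ IsIdempotentElem (8 * Npoly p) ∧
    IsIdempotentElem (1 + Qpoly p) ∧ IsIdempotentElem (1 + Npoly p) := by
  open Stmt16Aux in
  have hp4 : p % 4 = 3 := by omega
  have hp2 : p ≠ 2 := by omega
  have hchar : ringChar (ZMod p) ≠ 2 := by
    rw [ZMod.ringChar_zmod_n]; exact hp2
  have hS2 := SS_sq p
  have hSG := SS_mul_GG p hchar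
  have hGsq := GG_sq p hp4 hchar
  have hQ2 := two_Q p
  have hN2 := two_N p
  -- `9 = 0` in `Rn p`
  have h9 : (9 : Rn p) = 0 := by
    have h1 : ((9 : ℕ) : Rn p) = algebraMap (ZMod 9) (Rn p) ((9 : ℕ) : ZMod 9) :=
      (map_natCast (algebraMap (ZMod 9) (Rn p)) 9).symm
    have h2 : ((9 : ℕ) : ZMod 9) = 0 := by decide
    have : ((9 : ℕ) : Rn p) = 0 := by rw [h1, h2, map_zero]
    simpa using this
  -- `p + 1 = 0` in `Rn p`
  have hp1 : (p : Rn p) + 1 = 0 := by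
    obtain ⟨m, hm⟩ : 9 ∣ (p + 1) := by omega
    have : ((p : Rn p) + 1) = ((p + 1 : ℕ) : Rn p) := by push_cast; ring
    rw [this, hm]
    push_cast
    rw [h9]
    ring
  have cancel4 : ∀ y : Rn p, 4 * y = 0 → y = 0 := by
    intro y h
    linear_combination 7 * h - 3 * y * h9
  have hQsq : Qpoly p * Qpoly p = - Qpoly p := by
    have h4 : 4 * (Qpoly p * Qpoly p + Qpoly p) = 0 := by
      linear_combination (-(SS p + GG p + 2 * Qpoly p + 1)) * hQ2 + hS2 + 2 * hSG
        + hGsq + (SS p - 1) * hp1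
    linear_combination cancel4 _ h4
  have hNsq : Npoly p * Npoly p = - Npoly p := by
    have h4 : 4 * (Npoly p * Npoly p + Npoly p) = 0 := by
      linear_combination (-(SS p - GG p + 2 * Npoly p + 1)) * hN2 + hS2 - 2 * hSG
        + hGsq + (SS p - 1) * hp1
    linear_combination cancel4 _ h4
  refine ⟨?_, ?_, ?_, ?_⟩
  · show 8 * Qpoly p * (8 * Qpoly p) = 8 * Qpoly p
    linear_combination 64 * hQsq - 8 * Qpoly p * h9
  · show 8 * Npoly p * (8 * Npoly p) = 8 * Npoly p
    linear_combination 64 * hNsq - 8 * Npoly p * h9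
  · show (1 + Qpoly p) * (1 + Qpoly p) = 1 + Qpoly p
    linear_combination hQsq
  · show (1 + Npoly p) * (1 + Npoly p) = 1 + Npoly p
    linear_combination hNsq
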